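/- Let K be an algebraically closed field and let V be an irreducible weight D-module such that X acts injectively on V and the support of V lies in a single finite orbit ω of α on Max(R). Then, fixing a nonzero weight vector v₀, the vectors {X^i v₀ : 0 ≤ i < |ω|} span V; in particular dim V = |ω| and every weight space is one-dimensional. -/

import Mathlib

open Polynomial

/-- Simultaneous eigenvectors of two commuting-on-them operators with pairwise distinct
eigenvalue pairs: if a finite sum of them vanishes, each vanishes. -/
lemma weight_zero_sum {K V ι : Type*} [Field K] [AddCommGroup V] [Module K V] [DecidableEq ι]
    (T S : Module.End K V) (a b : ι → K) :
    ∀ (s : Finset ι) (w : ι → V),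
      (∀ i ∈ s, T (w i) = a i • w i) → (∀ i ∈ s, S (w i) = b i • w i) →
      (∀ i ∈ s, ∀ j ∈ s, i ≠ j → a i ≠ a j ∨ b i ≠ b j) →
      (∑ i ∈ s, w i) = 0 → ∀ i ∈ s, w i = 0 := by
  intro s
  induction s using Finset.strongInductionOn with
  | _ s ih =>
    intro w hT hS hd hsum
    rcases Finset.eq_empty_or_nonempty s with rfl | ⟨i₁, hi₁⟩
    · simp
    · have hsub : s.erase i₁ ⊂ s := Finset.erase_ssubset hi₁
      have key : ∀ (c : ι → K), (∀ i ∈ s, (c i) • w i = (fun v => c i • v) (w i)) → True := fun _ _ => trivial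
      have hTsum : (∑ i ∈ s, a i • w i) = 0 := by
        calc (∑ i ∈ s, a i • w i) = ∑ i ∈ s, T (w i) :=
              Finset.sum_congr rfl (fun i hi => (hT i hi).symm)
          _ = T (∑ i ∈ s, w i) := (map_sum T w s).symm
          _ = 0 := by rw [hsum, map_zero]
      have hSsum : (∑ i ∈ s, b i • w i) = 0 := by
        calc (∑ i ∈ s, b i • w i) = ∑ i ∈ s, S (w i) :=
              Finset.sum_congr rfl (fun i hi => (hS i hi).symm)
          _ = S (∑ i ∈ s, w i) := (map_sum S w s).symm
          _ = 0 := by rw [hsum, map_zero]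
      have hTza : ∑ i ∈ s.erase i₁, (a i - a i₁) • w i = 0 := by
        have h1 : ∑ i ∈ s, (a i - a i₁) • w i = 0 := by
          simp only [sub_smul]
          rw [Finset.sum_sub_distrib, hTsum, ← Finset.smul_sum, hsum, smul_zero, sub_zero]
        rw [← Finset.add_sum_erase s _ hi₁] at h1
        simpa using h1
      have hSza : ∑ i ∈ s.erase i₁, (b i - b i₁) • w i = 0 := by
        have h1 : ∑ i ∈ s, (b i - b i₁) • w i = 0 := by
          simp only [sub_smul]
          rw [Finset.sum_sub_distrib, hSsum, ← Finset.smul_sum, hsum, smul_zero, sub_zero]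
        rw [← Finset.add_sum_erase s _ hi₁] at h1
        simpa using h1
      have hza : ∀ i ∈ s.erase i₁, (a i - a i₁) • w i = 0 := by
        refine ih _ hsub (fun i => (a i - a i₁) • w i) ?_ ?_ ?_ hTza
        · intro i hi
          rw [map_smul, hT i (Finset.mem_of_mem_erase hi), smul_comm]
        · intro i hi
          rw [map_smul, hS i (Finset.mem_of_mem_erase hi), smul_comm]
        · intro i hi j hj hij
          exact hd i (Finset.mem_of_mem_erase hi) j (Finset.mem_of_mem_erase hj) hij
      have hzb : ∀ i ∈ s.erase i₁, (b i - b i₁) • w i = 0 := by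
        refine ih _ hsub (fun i => (b i - b i₁) • w i) ?_ ?_ ?_ hSza
        · intro i hi
          rw [map_smul, hT i (Finset.mem_of_mem_erase hi), smul_comm]
        · intro i hi
          rw [map_smul, hS i (Finset.mem_of_mem_erase hi), smul_comm]
        · intro i hi j hj hij
          exact hd i (Finset.mem_of_mem_erase hi) j (Finset.mem_of_mem_erase hj) hij
      have hw' : ∀ i ∈ s.erase i₁, w i = 0 := by
        intro i hi
        have hne := Finset.ne_of_mem_erase hi
        rcases hd i (Finset.mem_of_mem_erase hi) i₁ hi₁ hne with h | h
        · rcases smul_eq_zero.mp (hza i hi) with h0 | h0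
          · exact absurd (sub_eq_zero.mp h0) h
          · exact h0
        · rcases smul_eq_zero.mp (hzb i hi) with h0 | h0
          · exact absurd (sub_eq_zero.mp h0) h
          · exact h0
      have hw1 : w i₁ = 0 := by
        have h2 := Finset.add_sum_erase s w hi₁
        rw [Finset.sum_eq_zero hw', hsum, add_zero] at h2
        exact h2
      intro i hi
      rcases eq_or_ne i i₁ with rfl | hne
      · exact hw1
      · exact hw' i (Finset.mem_erase.mpr ⟨hne, hi⟩)

/-- Peeling linear factors off an annihilating polynomial yields an eigenvector. -/
lemma exists_eigen_of_aeval {K V : Type*} [Field K] [IsAlgClosed K] [AddCommGroup V]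
    [Module K V] (Z : Module.End K V) :
    ∀ (N : ℕ) (p : K[X]) (v : V), v ≠ 0 → p.natDegree ≤ N → p ≠ 0 →
      (Polynomial.aeval Z p) v = 0 → ∃ (lam : K) (w : V), w ≠ 0 ∧ Z w = lam • w := by
  intro N
  induction N with
  | zero =>
    intro p v hv hdeg hp h0
    have hpc : p = C (p.coeff 0) := Polynomial.eq_C_of_natDegree_eq_zero (Nat.le_zero.mp hdeg)
    rw [hpc, aeval_C, Module.algebraMap_end_apply] at h0
    have hc : p.coeff 0 ≠ 0 := fun h => hp (by rw [hpc, h, map_zero])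
    rcases smul_eq_zero.mp h0 with h | h
    · exact absurd h hc
    · exact absurd h hv
  | succ N ih =>
    intro p v hv hdeg hp h0
    by_cases hd0 : p.natDegree = 0
    · have hpc : p = C (p.coeff 0) := Polynomial.eq_C_of_natDegree_eq_zero hd0
      rw [hpc, aeval_C, Module.algebraMap_end_apply] at h0
      have hc : p.coeff 0 ≠ 0 := fun h => hp (by rw [hpc, h, map_zero])
      rcases smul_eq_zero.mp h0 with h | h
      · exact absurd h hc
      · exact absurd h hv
    · have hdeg' : p.degree ≠ 0 := by
        rw [Polynomial.degree_eq_natDegree hp]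
        exact_mod_cast hd0
      obtain ⟨lam, hlam⟩ := IsAlgClosed.exists_root p hdeg'
      obtain ⟨g, hg⟩ := Polynomial.dvd_iff_isRoot.mpr hlam
      have hgne : g ≠ 0 := by
        rintro rfl
        rw [mul_zero] at hg
        exact hp hg
      have hgdeg : g.natDegree ≤ N := by
        have h1 : p.natDegree = g.natDegree + 1 := by
          rw [hg, Polynomial.natDegree_mul (Polynomial.X_sub_C_ne_zero lam) hgne,
            Polynomial.natDegree_X_sub_C]
          ring
        omega
      by_cases hw : (aeval Z g) v = 0
      · exact ih g v hv hgdeg hgne hw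
      · refine ⟨lam, (aeval Z g) v, hw, ?_⟩
        have h1 : (aeval Z ((X - C lam) * g)) v = 0 := by rw [← hg]; exact h0
        rw [map_mul, Module.End.mul_apply] at h1
        rw [map_sub, aeval_X, aeval_C, LinearMap.sub_apply, Module.algebraMap_end_apply] at h1
        exact sub_eq_zero.mp h1



/-- Let `V` be an irreducible weight `D`-module on which `X` acts injectively, whose support
lies in a single finite orbit `ω = {(a₀+i, qⁱb₀) : 0 ≤ i < r}` of `α` on `Max R`.  Then for a
fixed nonzero weight vector `v₀` the vectors `Xⁱ v₀`, `0 ≤ i < r = |ω|`, span `V`; in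
particular `dim V = |ω|` and every weight space is one-dimensional. -/
theorem stmt16 (K : Type*) [Field K] [IsAlgClosed K] (q : K) (hq0 : q ≠ 0)
    (V : Type*) [AddCommGroup V] [Module K V]
    (Xo Yo Y1 T S : Module.End K V) (hSu : IsUnit S)
    (rel1 : Yo * Xo = T) (rel2 : Xo * Yo = T - 1)
    (rel3 : Y1 * Xo = q • S - 1) (rel4 : Xo * Y1 = S - 1)
    (rel5 : Y1 * (T - 1) = Yo * (S - 1))
    (rel6 : Xo * T = (T - 1) * Xo) (rel7 : Xo * S = q⁻¹ • (S * Xo))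
    (rel8 : Yo * T = (T + 1) * Yo) (rel9 : Yo * S = q • (S * Yo))
    (rel10 : Y1 * T = (T + 1) * Y1) (rel11 : Y1 * S = q • (S * Y1))
    (W : K → K → Submodule K V)
    (hW : ∀ a b : K, ∀ v : V, v ∈ W a b ↔ T v = a • v ∧ S v = b • v)
    (hweight : (⨆ a : K, ⨆ b : K, W a b) = ⊤)
    (hirr : ∀ p : Submodule K V,
      (∀ v ∈ p, Xo v ∈ p) → (∀ v ∈ p, Yo v ∈ p) → (∀ v ∈ p, Y1 v ∈ p) →
      (∀ v ∈ p, T v ∈ p) → (∀ v ∈ p, S v ∈ p) → p = ⊥ ∨ p = ⊤)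
    (hnz : ∃ v : V, v ≠ 0)
    (hXinj : Function.Injective Xo)
    (r : ℕ) (hr : 0 < r) (a₀ b₀ : K) (hb₀ : b₀ ≠ 0)
    -- the orbit of `(a₀, b₀)` under `α : (a,b) ↦ (a+1, q·b)` is finite of cardinality `r`
    (horb : (r : K) = 0 ∧ q ^ r = 1)
    (hmin : ∀ i : ℕ, 0 < i → i < r → ¬((i : K) = 0 ∧ q ^ i = 1))
    -- the support of `V` is contained in the orbit `ω`
    (hsupp : ∀ a b : K, W a b ≠ ⊥ → ∃ i : ℕ, i < r ∧ a = a₀ + i ∧ b = q ^ i * b₀)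
    (v₀ : V) (hv₀ : v₀ ∈ W a₀ b₀) (hv₀ne : v₀ ≠ 0) :
    Submodule.span K (Set.range fun i : Fin r => (Xo ^ (i : ℕ)) v₀) = ⊤ ∧
    Module.rank K V = r ∧
    (∀ a b : K, W a b ≠ ⊥ → Module.rank K (W a b) = 1) := by
  classical
  obtain ⟨hrK, hqr⟩ := horb
  -- pointwise versions of the relations
  have hYoX : ∀ v : V, Yo (Xo v) = T v := fun v => by
    have := LinearMap.ext_iff.mp rel1 v; simpa using this
  have hXYo : ∀ v : V, Xo (Yo v) = T v - v := fun v => by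
    have := LinearMap.ext_iff.mp rel2 v; simpa using this
  have hY1X : ∀ v : V, Y1 (Xo v) = q • S v - v := fun v => by
    have := LinearMap.ext_iff.mp rel3 v; simpa using this
  have hXY1 : ∀ v : V, Xo (Y1 v) = S v - v := fun v => by
    have := LinearMap.ext_iff.mp rel4 v; simpa using this
  have hXT : ∀ v : V, Xo (T v) = T (Xo v) - Xo v := fun v => by
    have := LinearMap.ext_iff.mp rel6 v; simpa using this
  have hXS : ∀ v : V, S (Xo v) = q • Xo (S v) := fun v => by
    have h := LinearMap.ext_iff.mp rel7 v
    simp only [Module.End.mul_apply, LinearMap.smul_apply] at h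
    rw [h, smul_smul, mul_inv_cancel₀ hq0, one_smul]
  -- commutation of powers of X with T and S
  have hTpow : ∀ (n : ℕ) (v : V), T ((Xo ^ n) v) = (Xo ^ n) (T v) + (n : K) • (Xo ^ n) v := by
    intro n
    induction n with
    | zero => intro v; simp
    | succ n ih =>
      intro v
      have h1 : (Xo ^ (n + 1)) v = Xo ((Xo ^ n) v) := by
        rw [pow_succ']; rfl
      have h2 : (Xo ^ (n + 1)) (T v) = Xo ((Xo ^ n) (T v)) := by
        rw [pow_succ']; rfl
      rw [h1, h2]
      have h3 := hXT ((Xo ^ n) v)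
      have h4 : T (Xo ((Xo ^ n) v)) = Xo (T ((Xo ^ n) v)) + Xo ((Xo ^ n) v) := by
        rw [h3]; abel
      rw [h4, ih, map_add, map_smul]
      push_cast
      rw [add_smul, one_smul]
      abel
  have hSpow : ∀ (n : ℕ) (v : V), S ((Xo ^ n) v) = q ^ n • (Xo ^ n) (S v) := by
    intro n
    induction n with
    | zero => intro v; simp
    | succ n ih =>
      intro v
      have h1 : (Xo ^ (n + 1)) v = Xo ((Xo ^ n) v) := by rw [pow_succ']; rfl
      have h2 : (Xo ^ (n + 1)) (S v) = Xo ((Xo ^ n) (S v)) := by rw [pow_succ']; rfl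
      rw [h1, h2, hXS, ih, map_smul, smul_smul, pow_succ']
  -- eigenvector transport along powers of X
  have hTXpow : ∀ (n : ℕ) (v : V) (a : K), T v = a • v →
      T ((Xo ^ n) v) = (a + n) • (Xo ^ n) v := by
    intro n v a hv
    rw [hTpow, hv, map_smul, add_smul]
  have hSXpow : ∀ (n : ℕ) (v : V) (b : K), S v = b • v →
      S ((Xo ^ n) v) = (q ^ n * b) • (Xo ^ n) v := by
    intro n v b hv
    rw [hSpow, hv, map_smul, smul_smul]
  -- injectivity of powers of X
  have hpow_inj : ∀ n : ℕ, Function.Injective ⇑(Xo ^ n) := by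
    intro n
    induction n with
    | zero => rw [pow_zero]; exact Function.injective_id
    | succ n ih =>
      have h : ⇑(Xo ^ (n + 1)) = ⇑Xo ∘ ⇑(Xo ^ n) := by
        funext v; rw [pow_succ']; rfl
      rw [h]; exact hXinj.comp ih
  -- the operator Z = X^r
  set Z : Module.End K V := Xo ^ r with hZdef
  obtain ⟨m, hm⟩ : ∃ m, r = m + 1 := ⟨r - 1, (Nat.succ_pred_eq_of_pos hr).symm⟩
  have hmK : (m : K) = -1 := by
    have h1 : ((m : K) + 1) = 0 := by
      have := hrK
      rw [hm] at this
      push_cast at this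
      exact this
    exact eq_neg_of_add_eq_zero_left h1
  have hZinj : Function.Injective ⇑Z := hpow_inj r
  -- pointwise commutation of Z with the five generators
  have hZT : ∀ v : V, T (Z v) = Z (T v) := by
    intro v
    rw [hZdef, hTpow, hrK, zero_smul, add_zero]
  have hZS : ∀ v : V, S (Z v) = Z (S v) := by
    intro v
    rw [hZdef, hSpow, hqr, one_smul]
  have hZX : ∀ v : V, Xo (Z v) = Z (Xo v) := by
    intro v
    have : Xo * Xo ^ r = Xo ^ r * Xo := by
      rw [← pow_succ, ← pow_succ']
    calc Xo (Z v) = (Xo * Xo ^ r) v := rfl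
      _ = (Xo ^ r * Xo) v := by rw [this]
      _ = Z (Xo v) := rfl
  have hsplit : ∀ v : V, Z v = Xo ((Xo ^ m) v) := by
    intro v
    rw [hZdef, hm, pow_succ']; rfl
  have hsplit' : ∀ v : V, Z v = (Xo ^ m) (Xo v) := by
    intro v
    rw [hZdef, hm, pow_succ]; rfl
  have hZYo : ∀ v : V, Yo (Z v) = Z (Yo v) := by
    intro v
    rw [hsplit v, hYoX, hsplit' (Yo v)]
    rw [hXYo, map_sub, hTpow]
    rw [hmK, neg_smul, one_smul]
    abel
  have hZY1 : ∀ v : V, Y1 (Z v) = Z (Y1 v) := by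
    intro v
    rw [hsplit v, hY1X, hsplit' (Y1 v)]
    rw [hXY1, map_sub, hSpow]
    rw [smul_smul, ← pow_succ', ← hm, hqr, one_smul]
  -- a helper to prove stability of spans
  have hstab : ∀ (A : Module.End K V) (s : Set V),
      (∀ x ∈ s, A x ∈ Submodule.span K s) →
      ∀ v ∈ Submodule.span K s, A v ∈ Submodule.span K s := by
    intro A s hs v hv
    have h1 : Submodule.map A (Submodule.span K s) ≤ Submodule.span K s := by
      rw [Submodule.map_span]
      refine Submodule.span_le.mpr ?_
      rintro y ⟨x, hx, rfl⟩
      exact hs x hx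
    exact h1 ⟨v, hv, rfl⟩
  -- Z is surjective
  have hZv₀ne : Z v₀ ≠ 0 := fun h => hv₀ne (hZinj (by rw [h, map_zero]))
  have hZsurj : Function.Surjective ⇑Z := by
    have := hirr (LinearMap.range Z) ?_ ?_ ?_ ?_ ?_
    · rcases this with h | h
      · exact absurd (h ▸ LinearMap.mem_range_self Z v₀ : Z v₀ ∈ (⊥ : Submodule K V))
          (by simpa using hZv₀ne)
      · exact LinearMap.range_eq_top.mp h
    · rintro v ⟨u, rfl⟩; exact ⟨Xo u, (hZX u).symm⟩
    · rintro v ⟨u, rfl⟩; exact ⟨Yo u, (hZYo u).symm⟩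
    · rintro v ⟨u, rfl⟩; exact ⟨Y1 u, (hZY1 u).symm⟩
    · rintro v ⟨u, rfl⟩; exact ⟨T u, (hZT u).symm⟩
    · rintro v ⟨u, rfl⟩; exact ⟨S u, (hZS u).symm⟩
  -- a (set-theoretic) right inverse of Z
  set Zi : V → V := fun v => Classical.choose (hZsurj v) with hZidef
  have hZZi : ∀ v : V, Z (Zi v) = v := fun v => Classical.choose_spec (hZsurj v)
  -- anything commuting with Z commutes with Zi
  have hcomm_inv : ∀ (A : V → V), (∀ v, A (Z v) = Z (A v)) → ∀ v, A (Zi v) = Zi (A v) := by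
    intro A hA v
    apply hZinj
    rw [← hA, hZZi, hZZi]
  have hcomm_iter : ∀ (A : V → V), (∀ v, A (Z v) = Z (A v)) →
      ∀ (j : ℕ) (v : V), A (Zi^[j] v) = Zi^[j] (A v) := by
    intro A hA j
    induction j with
    | zero => intro v; simp
    | succ j ih =>
      intro v
      rw [Function.iterate_succ_apply, Function.iterate_succ_apply, ih, hcomm_inv A hA]
  -- eigen-equations for v₀
  obtain ⟨hTv₀, hSv₀⟩ := (hW a₀ b₀ v₀).mp hv₀
  -- eigen-equations for Zi-iterates of v₀
  have hTZi : ∀ j : ℕ, T (Zi^[j] v₀) = a₀ • Zi^[j] v₀ := by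
    intro j
    rw [hcomm_iter T hZT j v₀, hTv₀]
    exact (hcomm_iter (fun v => a₀ • v) (fun v => (map_smul Z a₀ v).symm) j v₀).symm
  have hSZi : ∀ j : ℕ, S (Zi^[j] v₀) = b₀ • Zi^[j] v₀ := by
    intro j
    rw [hcomm_iter S hZS j v₀, hSv₀]
    exact (hcomm_iter (fun v => b₀ • v) (fun v => (map_smul Z b₀ v).symm) j v₀).symm
  -- the generating family of the big span
  set g : ℕ → ℕ → V := fun n j => (Xo ^ n) (Zi^[j] v₀) with hgdef
  have hTg : ∀ n j, T (g n j) = (a₀ + n) • g n j := fun n j => hTXpow n _ a₀ (hTZi j)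
  have hSg : ∀ n j, S (g n j) = (q ^ n * b₀) • g n j := fun n j => hSXpow n _ b₀ (hSZi j)
  -- action formulas for Yo and Y1 on v₀ (via injectivity of X)
  have hYov₀ : Yo v₀ = (a₀ - 1) • (Xo ^ m) (Zi v₀) := by
    apply hXinj
    rw [hXYo, hTv₀, map_smul, ← hsplit (Zi v₀), hZZi, sub_smul, one_smul]
  have hY1v₀ : Y1 v₀ = (b₀ - 1) • (Xo ^ m) (Zi v₀) := by
    apply hXinj
    rw [hXY1, hSv₀, map_smul, ← hsplit (Zi v₀), hZZi, sub_smul, one_smul]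
  -- Xo commutes (pointwise) with Zi, and powers of Xo commute with Zi-iterates
  have hXZi : ∀ (n : ℕ) (j : ℕ) (v : V), (Xo ^ n) (Zi^[j] v) = Zi^[j] ((Xo ^ n) v) := by
    intro n j v
    refine hcomm_iter (⇑(Xo ^ n)) ?_ j v
    intro u
    induction n with
    | zero => simp
    | succ n ih =>
      have h1 : ∀ w : V, (Xo ^ (n + 1)) w = Xo ((Xo ^ n) w) := fun w => by rw [pow_succ']; rfl
      rw [h1, h1, ih, hZX]
  -- the span of the g's is all of V
  have hg00 : g 0 0 = v₀ := by simp [hgdef]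
  set bigS : Set V := Set.range (fun p : ℕ × ℕ => g p.1 p.2) with hbigS
  have hgen : ∀ n j, g n j ∈ Submodule.span K bigS := fun n j =>
    Submodule.subset_span ⟨(n, j), rfl⟩
  have hUtop : Submodule.span K bigS = ⊤ := by
    have := hirr (Submodule.span K bigS) ?_ ?_ ?_ ?_ ?_
    · rcases this with h | h
      · exfalso
        apply hv₀ne
        have : v₀ ∈ Submodule.span K bigS := hg00 ▸ hgen 0 0
        rw [h] at this
        simpa using this
      · exact h
    · refine hstab Xo bigS ?_
      rintro x ⟨⟨n, j⟩, rfl⟩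
      have : Xo (g n j) = g (n + 1) j := by
        show Xo ((Xo ^ n) (Zi^[j] v₀)) = (Xo ^ (n+1)) (Zi^[j] v₀)
        rw [pow_succ']; rfl
      rw [this]; exact hgen _ _
    · refine hstab Yo bigS ?_
      rintro x ⟨⟨n, j⟩, rfl⟩
      match n with
      | 0 =>
        have h1 : Yo (g 0 j) = Zi^[j] (Yo v₀) := by
          show Yo ((Xo ^ 0) (Zi^[j] v₀)) = _
          rw [pow_zero]
          exact hcomm_iter Yo hZYo j v₀
        have h2 : Zi^[j] (Yo v₀) = (a₀ - 1) • g m (j + 1) := by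
          rw [hYov₀,
            ← hcomm_iter (fun v => (a₀ - 1) • v) (fun v => (map_smul Z _ v).symm) j,
            ← hXZi m j (Zi v₀), ← Function.iterate_succ_apply]
        rw [h1, h2]
        exact Submodule.smul_mem _ _ (hgen m (j + 1))
      | n + 1 =>
        have e : g (n + 1) j = Xo (g n j) := by
          show (Xo ^ (n + 1)) _ = _
          rw [pow_succ']; rfl
        have h1 : Yo (g (n + 1) j) = (a₀ + n) • g n j := by rw [e, hYoX, hTg]
        rw [h1]
        exact Submodule.smul_mem _ _ (hgen n j)
    · refine hstab Y1 bigS ?_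
      rintro x ⟨⟨n, j⟩, rfl⟩
      match n with
      | 0 =>
        have h1 : Y1 (g 0 j) = Zi^[j] (Y1 v₀) := by
          show Y1 ((Xo ^ 0) (Zi^[j] v₀)) = _
          rw [pow_zero]
          exact hcomm_iter Y1 hZY1 j v₀
        have h2 : Zi^[j] (Y1 v₀) = (b₀ - 1) • g m (j + 1) := by
          rw [hY1v₀,
            ← hcomm_iter (fun v => (b₀ - 1) • v) (fun v => (map_smul Z _ v).symm) j,
            ← hXZi m j (Zi v₀), ← Function.iterate_succ_apply]
        rw [h1, h2]
        exact Submodule.smul_mem _ _ (hgen m (j + 1))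
      | n + 1 =>
        have e : g (n + 1) j = Xo (g n j) := by
          show (Xo ^ (n + 1)) _ = _
          rw [pow_succ']; rfl
        have h1 : Y1 (g (n + 1) j) = q • (q ^ n * b₀) • g n j - g n j := by
          rw [e, hY1X, hSg]
        rw [h1]
        exact Submodule.sub_mem _
          (Submodule.smul_mem _ _ (Submodule.smul_mem _ _ (hgen n j))) (hgen n j)
    · refine hstab T bigS ?_
      rintro x ⟨⟨n, j⟩, rfl⟩
      rw [hTg]
      exact Submodule.smul_mem _ _ (hgen n j)
    · refine hstab S bigS ?_
      rintro x ⟨⟨n, j⟩, rfl⟩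
      rw [hSg]
      exact Submodule.smul_mem _ _ (hgen n j)
  -- casts modulo r
  have hcast : ∀ n : ℕ, ((n : K) = ((n % r : ℕ) : K)) ∧ q ^ n = q ^ (n % r) := by
    intro n
    constructor
    · conv_lhs => rw [← Nat.div_add_mod n r]
      push_cast
      rw [hrK]
      ring
    · conv_lhs => rw [← Nat.div_add_mod n r]
      rw [pow_add, pow_mul, hqr, one_pow, one_mul]
  -- the r weights in the orbit are pairwise distinct
  have hdistinct : ∀ i j : ℕ, i < r → j < r → i ≠ j →
      a₀ + (i : K) ≠ a₀ + (j : K) ∨ q ^ i * b₀ ≠ q ^ j * b₀ := by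
    have aux : ∀ i j : ℕ, i < j → j < r → (i : K) = (j : K) → q ^ i = q ^ j → False := by
      intro i j hij hjr h1 h2
      apply hmin (j - i) (by omega) (by omega)
      constructor
      · have hcs : ((j - i : ℕ) : K) = (j : K) - (i : K) := Nat.cast_sub (le_of_lt hij)
        rw [hcs, ← h1, sub_self]
      · have h3 : q ^ j = q ^ i * q ^ (j - i) := by
          rw [← pow_add]; congr 1; omega
        have h4 : q ^ i ≠ 0 := pow_ne_zero _ hq0
        have h5 := mul_left_cancel₀ h4 (by rw [mul_one]; exact h2.trans h3 :
          q ^ i * 1 = q ^ i * q ^ (j - i))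
        exact h5.symm
    intro i j hi hj hij
    by_contra hc
    push_neg at hc
    obtain ⟨e1, e2⟩ := hc
    have hik : (i : K) = (j : K) := by
      have := e1; exact add_left_cancel this
    have hqk : q ^ i = q ^ j := mul_right_cancel₀ hb₀ e2
    rcases lt_or_gt_of_ne hij with h | h
    · exact aux i j h hj hik hqk
    · exact aux j i h hi hik.symm hqk.symm
  -- existence of a nonzero annihilating polynomial of Z at v₀
  have hpoly : ∃ p : K[X], p ≠ 0 ∧ (Polynomial.aeval Z p) v₀ = 0 := by
    by_contra hnp
    push_neg at hnp
    have hXm1ne : ((X : K[X]) - 1) ≠ 0 := by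
      rw [← Polynomial.C_1]; exact Polynomial.X_sub_C_ne_zero 1
    have hZ1ne : Z v₀ - v₀ ≠ 0 := by
      intro h
      refine hnp ((X : K[X]) - 1) hXm1ne ?_
      rw [map_sub, aeval_X, map_one, LinearMap.sub_apply, Module.End.one_apply]
      exact h
    -- the range of Z - 1 is a nonzero submodule, hence everything
    have hZ1v : ∀ v : V, (Z - 1) v = Z v - v := fun v => by
      rw [LinearMap.sub_apply, Module.End.one_apply]
    have hrange := hirr (LinearMap.range (Z - 1)) ?_ ?_ ?_ ?_ ?_
    rotate_left
    · rintro v ⟨u, rfl⟩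
      exact ⟨Xo u, by rw [hZ1v, hZ1v, map_sub, hZX]⟩
    · rintro v ⟨u, rfl⟩
      exact ⟨Yo u, by rw [hZ1v, hZ1v, map_sub, hZYo]⟩
    · rintro v ⟨u, rfl⟩
      exact ⟨Y1 u, by rw [hZ1v, hZ1v, map_sub, hZY1]⟩
    · rintro v ⟨u, rfl⟩
      exact ⟨T u, by rw [hZ1v, hZ1v, map_sub, hZT]⟩
    · rintro v ⟨u, rfl⟩
      exact ⟨S u, by rw [hZ1v, hZ1v, map_sub, hZS]⟩
    rcases hrange with hbot | htop
    · exfalso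
      apply hZ1ne
      have : Z v₀ - v₀ ∈ LinearMap.range (Z - 1) := ⟨v₀, hZ1v v₀⟩
      rw [hbot] at this
      simpa using this
    obtain ⟨u, hu⟩ : ∃ u : V, Z u - u = v₀ := by
      obtain ⟨u, hu⟩ := LinearMap.range_eq_top.mp htop v₀
      exact ⟨u, by rw [← hZ1v]; exact hu⟩
    -- write u in terms of the generating family
    have humem : u ∈ Submodule.span K bigS := by rw [hUtop]; exact Submodule.mem_top
    obtain ⟨c, hc⟩ := Finsupp.mem_span_range_iff_exists_finsupp.mp humem
    set uc : ℕ → V := fun i =>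
      ∑ p ∈ c.support.filter (fun p : ℕ × ℕ => p.1 % r = i), c p • g p.1 p.2 with hucdef
    have husum : ∑ i ∈ Finset.range r, uc i = u := by
      rw [← hc, Finsupp.sum]
      exact Finset.sum_fiberwise_of_maps_to
        (fun p _ => Finset.mem_range.mpr (Nat.mod_lt _ hr)) _
    have hTuc : ∀ i : ℕ, T (uc i) = (a₀ + (i : K)) • uc i := by
      intro i
      rw [map_sum, Finset.smul_sum]
      refine Finset.sum_congr rfl ?_
      intro p hp
      have hpm : p.1 % r = i := (Finset.mem_filter.mp hp).2
      have hpe : (a₀ + ((p.1 : ℕ) : K)) = a₀ + (i : K) := by rw [(hcast p.1).1, hpm]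
      rw [map_smul, hTg, hpe, smul_comm]
    have hSuc : ∀ i : ℕ, S (uc i) = (q ^ i * b₀) • uc i := by
      intro i
      rw [map_sum, Finset.smul_sum]
      refine Finset.sum_congr rfl ?_
      intro p hp
      have hpm : p.1 % r = i := (Finset.mem_filter.mp hp).2
      have hpe : q ^ p.1 * b₀ = q ^ i * b₀ := by rw [(hcast p.1).2, hpm]
      rw [map_smul, hSg, hpe, smul_comm]
    -- project the identity v₀ = (Z-1)u onto the weight components
    set y : ℕ → V := fun i => Z (uc i) - uc i - (if i = 0 then v₀ else 0) with hydef
    have hysum : ∑ i ∈ Finset.range r, y i = 0 := by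
      rw [hydef]
      rw [Finset.sum_sub_distrib, Finset.sum_sub_distrib]
      rw [← map_sum, husum]
      rw [Finset.sum_ite_eq' (Finset.range r) 0 (fun _ => v₀)]
      rw [if_pos (Finset.mem_range.mpr hr)]
      rw [hu]
      abel
    have hTy : ∀ i ∈ Finset.range r, T (y i) = (a₀ + (i : K)) • y i := by
      intro i _
      by_cases h0 : i = 0
      · subst h0
        show T (Z (uc 0) - uc 0 - ite (0 = 0) v₀ 0) =
          (a₀ + ((0 : ℕ) : K)) • (Z (uc 0) - uc 0 - ite (0 = 0) v₀ 0)
        rw [if_pos rfl, map_sub, map_sub, hZT, hTuc, hTv₀, map_smul]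
        simp only [Nat.cast_zero, add_zero]
        rw [smul_sub, smul_sub]
      · show T (Z (uc i) - uc i - ite (i = 0) v₀ 0) =
          (a₀ + (i : K)) • (Z (uc i) - uc i - ite (i = 0) v₀ 0)
        rw [if_neg h0, sub_zero, map_sub, hZT, hTuc, map_smul, smul_sub]
    have hSy : ∀ i ∈ Finset.range r, S (y i) = (q ^ i * b₀) • y i := by
      intro i _
      by_cases h0 : i = 0
      · subst h0
        show S (Z (uc 0) - uc 0 - ite (0 = 0) v₀ 0) =
          (q ^ 0 * b₀) • (Z (uc 0) - uc 0 - ite (0 = 0) v₀ 0)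
        rw [if_pos rfl, map_sub, map_sub, hZS, hSuc, hSv₀, map_smul]
        simp only [pow_zero, one_mul]
        rw [smul_sub, smul_sub]
      · show S (Z (uc i) - uc i - ite (i = 0) v₀ 0) =
          (q ^ i * b₀) • (Z (uc i) - uc i - ite (i = 0) v₀ 0)
        rw [if_neg h0, sub_zero, map_sub, hZS, hSuc, map_smul, smul_sub]
    have hy0 : y 0 = 0 := by
      refine weight_zero_sum T S (fun i : ℕ => a₀ + (i : K)) (fun i : ℕ => q ^ i * b₀)
        (Finset.range r) y hTy hSy ?_ hysum 0 (Finset.mem_range.mpr hr)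
      intro i hi j hj hij
      exact hdistinct i j (Finset.mem_range.mp hi) (Finset.mem_range.mp hj) hij
    have hv₀eq : Z (uc 0) - uc 0 = v₀ := by
      have := hy0
      rw [hydef] at this
      simp only [if_pos rfl] at this
      exact sub_eq_zero.mp this
    -- power-shifting lemmas for Z and Zi
    have hZj : ∀ (j : ℕ) (v : V), (Z ^ j) (Zi^[j] v) = v := by
      intro j
      induction j with
      | zero => intro v; simp
      | succ j ih =>
        intro v
        rw [Function.iterate_succ_apply']
        have h1 : (Z ^ (j + 1)) (Zi (Zi^[j] v)) = (Z ^ j) (Z (Zi (Zi^[j] v))) := by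
          rw [pow_succ]; rfl
        rw [h1, hZZi, ih]
    have hZk : ∀ (k j : ℕ) (v : V), j ≤ k → (Z ^ k) (Zi^[j] v) = (Z ^ (k - j)) v := by
      intro k j v hjk
      have h1 : (Z ^ k) (Zi^[j] v) = (Z ^ (k - j)) ((Z ^ j) (Zi^[j] v)) := by
        have : Z ^ k = Z ^ (k - j) * Z ^ j := by rw [← pow_add]; congr 1; omega
        rw [this]; rfl
      rw [h1, hZj]
    -- the final contradiction: build an annihilating polynomial
    set J : ℕ := c.support.sup (fun p : ℕ × ℕ => p.2) with hJdef
    set supp0 := c.support.filter (fun p : ℕ × ℕ => p.1 % r = 0) with hsupp0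
    have hterm : ∀ p ∈ supp0, (Z ^ J) (g p.1 p.2) = (Z ^ (J + p.1 / r - p.2)) v₀ := by
      intro p hp
      obtain ⟨hps, hpm⟩ := Finset.mem_filter.mp hp
      have hpJ : p.2 ≤ J := Finset.le_sup (f := fun p : ℕ × ℕ => p.2) hps
      have hgp : g p.1 p.2 = (Z ^ (p.1 / r)) (Zi^[p.2] v₀) := by
        show (Xo ^ p.1) (Zi^[p.2] v₀) = ((Xo ^ r) ^ (p.1 / r)) (Zi^[p.2] v₀)
        rw [← pow_mul]
        congr 2
        exact (Nat.mul_div_cancel' (Nat.dvd_of_mod_eq_zero hpm)).symm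
      rw [hgp]
      have h1 : (Z ^ J) ((Z ^ (p.1 / r)) (Zi^[p.2] v₀)) = (Z ^ (J + p.1 / r)) (Zi^[p.2] v₀) := by
        rw [pow_add]; rfl
      rw [h1, hZk _ _ _ (le_trans hpJ (Nat.le_add_right J _))]
    set h : K[X] := ∑ p ∈ supp0, (C (c p) * X ^ (J + p.1 / r - p.2)) with hhdef
    have haeh : (aeval Z h) v₀ = (Z ^ J) (uc 0) := by
      rw [hhdef, map_sum, LinearMap.sum_apply]
      have : (Z ^ J) (uc 0) = ∑ p ∈ supp0, c p • (Z ^ J) (g p.1 p.2) := by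
        rw [hucdef, map_sum]
        exact Finset.sum_congr rfl (fun p _ => map_smul _ _ _)
      rw [this]
      refine Finset.sum_congr rfl ?_
      intro p hp
      rw [map_mul, aeval_C, aeval_X_pow, Module.End.mul_apply, Module.algebraMap_end_apply,
        hterm p hp]
    set pfin : K[X] := X ^ J - (X - 1) * h with hpfin
    have hpfz : (aeval Z pfin) v₀ = 0 := by
      rw [hpfin, map_sub, map_mul, aeval_X_pow, LinearMap.sub_apply, Module.End.mul_apply,
        haeh, map_sub, aeval_X, map_one, LinearMap.sub_apply, Module.End.one_apply]
      have hcommJ : Z ((Z ^ J) (uc 0)) = (Z ^ J) (Z (uc 0)) := by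
        have : Z * Z ^ J = Z ^ J * Z := by rw [← pow_succ, ← pow_succ']
        calc Z ((Z ^ J) (uc 0)) = (Z * Z ^ J) (uc 0) := rfl
          _ = (Z ^ J * Z) (uc 0) := by rw [this]
          _ = (Z ^ J) (Z (uc 0)) := rfl
      rw [hcommJ, ← map_sub, hv₀eq, sub_self]
    have hpfne : pfin ≠ 0 := by
      intro h0
      have := congrArg (Polynomial.eval 1) h0
      rw [hpfin] at this
      simp at this
    exact hnp pfin hpfne hpfz
  -- Z acts as a nonzero scalar
  obtain ⟨p, hpne, hpz⟩ := hpoly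
  obtain ⟨lam, w, hwne, hew⟩ :=
    exists_eigen_of_aeval Z p.natDegree p v₀ hv₀ne le_rfl hpne hpz
  have hkermem : ∀ v : V, v ∈ LinearMap.ker (Z - lam • 1) ↔ Z v = lam • v := by
    intro v
    rw [LinearMap.mem_ker, LinearMap.sub_apply, LinearMap.smul_apply, Module.End.one_apply,
      sub_eq_zero]
  have hZlam : ∀ v : V, Z v = lam • v := by
    have hk := hirr (LinearMap.ker (Z - lam • 1)) ?_ ?_ ?_ ?_ ?_
    rotate_left
    · intro v hv
      rw [hkermem] at hv ⊢
      rw [← hZX, hv, map_smul]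
    · intro v hv
      rw [hkermem] at hv ⊢
      rw [← hZYo, hv, map_smul]
    · intro v hv
      rw [hkermem] at hv ⊢
      rw [← hZY1, hv, map_smul]
    · intro v hv
      rw [hkermem] at hv ⊢
      rw [← hZT, hv, map_smul]
    · intro v hv
      rw [hkermem] at hv ⊢
      rw [← hZS, hv, map_smul]
    rcases hk with hbot | htop
    · exfalso
      apply hwne
      have : w ∈ LinearMap.ker (Z - lam • 1) := (hkermem w).mpr hew
      rw [hbot] at this
      simpa using this
    · intro v
      exact (hkermem v).mp (by rw [htop]; exact Submodule.mem_top)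
  have hlam0 : lam ≠ 0 := by
    intro h
    exact hZv₀ne (by rw [hZlam v₀, h, zero_smul])
  -- the span of the r vectors Xⁱ v₀
  set fam : Fin r → V := fun i => (Xo ^ (i : ℕ)) v₀ with hfamdef
  have hfam_mem : ∀ i : Fin r, fam i ∈ Submodule.span K (Set.range fam) := fun i =>
    Submodule.subset_span ⟨i, rfl⟩
  have hfam_memn : ∀ n : ℕ, (hn : n < r) → (Xo ^ n) v₀ ∈ Submodule.span K (Set.range fam) :=
    fun n hn => hfam_mem ⟨n, hn⟩
  have hv₀mem : v₀ ∈ Submodule.span K (Set.range fam) := by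
    have := hfam_memn 0 hr
    simpa using this
  have hZiv₀ : Zi v₀ = lam⁻¹ • v₀ := by
    apply hZinj
    rw [hZZi, hZlam, smul_smul, mul_inv_cancel₀ hlam0, one_smul]
  have hUspan : Submodule.span K (Set.range fam) = ⊤ := by
    have hUir := hirr (Submodule.span K (Set.range fam)) ?_ ?_ ?_ ?_ ?_
    rotate_left
    · refine hstab Xo _ ?_
      rintro x ⟨i, rfl⟩
      have he : Xo (fam i) = (Xo ^ ((i : ℕ) + 1)) v₀ := by
        show Xo ((Xo ^ (i : ℕ)) v₀) = _
        rw [pow_succ']; rfl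
      by_cases hlt : (i : ℕ) + 1 < r
      · rw [he]; exact hfam_memn _ hlt
      · have him : (i : ℕ) = m := by omega
        have : Xo (fam i) = lam • v₀ := by
          show Xo ((Xo ^ (i : ℕ)) v₀) = _
          rw [him, ← hsplit, hZlam]
        rw [this]
        exact Submodule.smul_mem _ _ hv₀mem
    · refine hstab Yo _ ?_
      rintro x ⟨i, rfl⟩
      rcases i with ⟨iv, hiv⟩
      match iv, hiv with
      | 0, hiv =>
        have h1 : Yo (fam ⟨0, hiv⟩) = ((a₀ - 1) * lam⁻¹) • (Xo ^ m) v₀ := by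
          show Yo ((Xo ^ 0) v₀) = _
          rw [pow_zero, Module.End.one_apply, hYov₀, hZiv₀, map_smul, smul_smul]
        rw [h1]
        exact Submodule.smul_mem _ _ (hfam_memn m (by omega))
      | n + 1, hiv =>
        have h1 : Yo (fam ⟨n + 1, hiv⟩) = (a₀ + n) • (Xo ^ n) v₀ := by
          show Yo ((Xo ^ (n + 1)) v₀) = _
          rw [pow_succ']
          show Yo (Xo ((Xo ^ n) v₀)) = _
          rw [hYoX, hTXpow n v₀ a₀ hTv₀]
        rw [h1]
        exact Submodule.smul_mem _ _ (hfam_memn n (by omega))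
    · refine hstab Y1 _ ?_
      rintro x ⟨i, rfl⟩
      rcases i with ⟨iv, hiv⟩
      match iv, hiv with
      | 0, hiv =>
        have h1 : Y1 (fam ⟨0, hiv⟩) = ((b₀ - 1) * lam⁻¹) • (Xo ^ m) v₀ := by
          show Y1 ((Xo ^ 0) v₀) = _
          rw [pow_zero, Module.End.one_apply, hY1v₀, hZiv₀, map_smul, smul_smul]
        rw [h1]
        exact Submodule.smul_mem _ _ (hfam_memn m (by omega))
      | n + 1, hiv =>
        have h1 : Y1 (fam ⟨n + 1, hiv⟩) = (q • ((q ^ n * b₀) • (Xo ^ n) v₀)) - (Xo ^ n) v₀ := by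
          show Y1 ((Xo ^ (n + 1)) v₀) = _
          rw [pow_succ']
          show Y1 (Xo ((Xo ^ n) v₀)) = _
          rw [hY1X, hSXpow n v₀ b₀ hSv₀]
        rw [h1]
        exact Submodule.sub_mem _
          (Submodule.smul_mem _ _ (Submodule.smul_mem _ _ (hfam_memn n (by omega))))
          (hfam_memn n (by omega))
    · refine hstab T _ ?_
      rintro x ⟨i, rfl⟩
      have h1 : T (fam i) = (a₀ + (i : ℕ)) • fam i := hTXpow _ v₀ a₀ hTv₀
      rw [h1]
      exact Submodule.smul_mem _ _ (hfam_mem i)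
    · refine hstab S _ ?_
      rintro x ⟨i, rfl⟩
      have h1 : S (fam i) = (q ^ (i : ℕ) * b₀) • fam i := hSXpow _ v₀ b₀ hSv₀
      rw [h1]
      exact Submodule.smul_mem _ _ (hfam_mem i)
    rcases hUir with hbot | htop
    · exfalso
      apply hv₀ne
      rw [hbot] at hv₀mem
      simpa using hv₀mem
    · exact htop
  -- nonvanishing and weights of the family
  have hfam_ne : ∀ i : Fin r, fam i ≠ 0 := by
    intro i h
    exact hv₀ne (hpow_inj (i : ℕ) (by rw [map_zero]; exact h : (Xo ^ (i : ℕ)) v₀ = (Xo ^ (i : ℕ)) 0))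
  have hdFin : ∀ i ∈ (Finset.univ : Finset (Fin r)), ∀ j ∈ (Finset.univ : Finset (Fin r)),
      i ≠ j → (fun i : Fin r => a₀ + ((i : ℕ) : K)) i ≠ (fun i : Fin r => a₀ + ((i : ℕ) : K)) j ∨
      (fun i : Fin r => q ^ (i : ℕ) * b₀) i ≠ (fun i : Fin r => q ^ (i : ℕ) * b₀) j := by
    intro i _ j _ hij
    exact hdistinct i j i.2 j.2 (fun h => hij (Fin.ext h))
  -- linear independence
  have hli : LinearIndependent K fam := by
    rw [Fintype.linearIndependent_iff]
    intro gc hgc i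
    have hz := weight_zero_sum T S (fun i : Fin r => a₀ + ((i : ℕ) : K))
      (fun i : Fin r => q ^ (i : ℕ) * b₀) Finset.univ (fun i => gc i • fam i) ?_ ?_ hdFin
      hgc i (Finset.mem_univ i)
    rotate_left
    · intro i _
      rw [map_smul, hTXpow _ v₀ a₀ hTv₀, smul_comm]
    · intro i _
      rw [map_smul, hSXpow _ v₀ b₀ hSv₀, smul_comm]
    rcases smul_eq_zero.mp hz with h | h
    · exact h
    · exact absurd h (hfam_ne i)
  refine ⟨hUspan, ?_, ?_⟩
  · -- the rank of V
    have hbasis : Module.Basis (Fin r) K V := Module.Basis.mk hli (le_of_eq hUspan.symm)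
    rw [rank_eq_card_basis hbasis, Fintype.card_fin]
  · -- each weight space is one-dimensional
    intro a b hab
    obtain ⟨i, hir, rfl, rfl⟩ := hsupp a b hab
    rw [rank_submodule_eq_one_iff]
    refine ⟨(Xo ^ i) v₀, ?_, ?_, ?_⟩
    · rw [hW]
      exact ⟨hTXpow i v₀ a₀ hTv₀, hSXpow i v₀ b₀ hSv₀⟩
    · intro h
      exact hv₀ne (hpow_inj i (by rw [h, map_zero] : (Xo ^ i) v₀ = (Xo ^ i) 0))
    · intro u hu
      rw [Submodule.mem_span_singleton]
      have humem : u ∈ Submodule.span K (Set.range fam) := by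
        rw [hUspan]; exact Submodule.mem_top
      obtain ⟨cx, hcx⟩ := Submodule.mem_span_range_iff_exists_fun K |>.mp humem
      obtain ⟨hTu, hSu'⟩ := (hW _ _ u).mp hu
      set i' : Fin r := ⟨i, hir⟩ with hi'def
      have hz := weight_zero_sum T S (fun j : Fin r => a₀ + ((j : ℕ) : K))
        (fun j : Fin r => q ^ (j : ℕ) * b₀) Finset.univ
        (fun j => cx j • fam j - (if j = i' then u else 0)) ?_ ?_ hdFin ?_ i' (Finset.mem_univ i')
      rotate_left
      · intro j _
        show T (cx j • fam j - (if j = i' then u else 0)) =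
          (a₀ + ((j : ℕ) : K)) • (cx j • fam j - (if j = i' then u else 0))
        by_cases hj : j = i'
        · subst hj
          rw [if_pos rfl, map_sub, map_smul, hTXpow _ v₀ a₀ hTv₀, hTu, smul_comm, smul_sub]
        · rw [if_neg hj, sub_zero, map_smul, hTXpow _ v₀ a₀ hTv₀, smul_comm]
      · intro j _
        show S (cx j • fam j - (if j = i' then u else 0)) =
          (q ^ (j : ℕ) * b₀) • (cx j • fam j - (if j = i' then u else 0))
        by_cases hj : j = i'
        · subst hj
          rw [if_pos rfl, map_sub, map_smul, hSXpow _ v₀ b₀ hSv₀, hSu', smul_comm, smul_sub]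
        · rw [if_neg hj, sub_zero, map_smul, hSXpow _ v₀ b₀ hSv₀, smul_comm]
      · show (∑ j : Fin r, (cx j • fam j - (if j = i' then u else 0))) = 0
        rw [Finset.sum_sub_distrib, hcx, Finset.sum_ite_eq' Finset.univ i' (fun _ => u),
          if_pos (Finset.mem_univ i'), sub_self]
      refine ⟨cx i', ?_⟩
      have hz' : cx i' • fam i' - (if i' = i' then u else 0) = 0 := hz
      rw [if_pos rfl] at hz'
      exact sub_eq_zero.mp hz'
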